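/- Let N ≥ 1, let ψ : [0,∞) → ℝ be a strictly convex function, and let U ∈ U(N) be an N×N complex unitary matrix. Then Σ_{i,j} ψ(|U_{ij}|²) ≥ N²·ψ(1/N), with equality if and only if |U_{ij}| = 1/√N for all i,j, i.e. if and only if √N·U is a complex Hadamard matrix. -/

import Mathlib

open Finset

/-- For `N ≥ 1`, a strictly convex `ψ : [0,∞) → ℝ` and a unitary
`U ∈ U(N)`, one has `∑_{i,j} ψ(|U_{ij}|²) ≥ N² ψ(1/N)`, with equality iff
`|U_{ij}| = 1/√N` for all `i, j` (i.e. `√N · U` is complex Hadamard). -/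
theorem stmt0 (N : ℕ) (hN : 1 ≤ N) (ψ : ℝ → ℝ)
    (hψ : StrictConvexOn ℝ (Set.Ici 0) ψ)
    (U : Matrix (Fin N) (Fin N) ℂ) (hU : U ∈ Matrix.unitaryGroup (Fin N) ℂ) :
    (N : ℝ) ^ 2 * ψ (1 / N) ≤ ∑ i, ∑ j, ψ (‖U i j‖ ^ 2) ∧
    ((∑ i, ∑ j, ψ (‖U i j‖ ^ 2) = (N : ℝ) ^ 2 * ψ (1 / N)) ↔
      ∀ i j, ‖U i j‖ = 1 / Real.sqrt N) := by
  have hNpos : (0 : ℝ) < N := by exact_mod_cast hN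
  have hNne : (N : ℝ) ≠ 0 := hNpos.ne'
  -- row sums equal 1
  have hUU : U * star U = 1 := (Matrix.mem_unitaryGroup_iff).mp hU
  have hrow : ∀ i : Fin N, ∑ j, ‖U i j‖ ^ 2 = 1 := by
    intro i
    have h1 : (U * star U) i i = 1 := by rw [hUU]; simp
    have h2 : ∑ j, U i j * star (U i j) = 1 := by
      simpa [Matrix.mul_apply, Matrix.star_apply] using h1
    have h3 : ((∑ j, Complex.normSq (U i j) : ℝ) : ℂ) = 1 := by
      push_cast
      simpa [Complex.mul_conj] using h2
    have h4 : ∑ j, Complex.normSq (U i j) = 1 := by exact_mod_cast h3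
    simpa [Complex.sq_norm] using h4
  set p : Fin N × Fin N → ℝ := fun q => ‖U q.1 q.2‖ ^ 2 with hp
  have htot : ∑ q : Fin N × Fin N, p q = N := by
    rw [Fintype.sum_prod_type]
    simp [hp, hrow]
  have h₀ : ∀ q : Fin N × Fin N, q ∈ univ → (0 : ℝ) < 1 / (N : ℝ) ^ 2 := by
    intro q _; positivity
  have h₁ : ∑ _q : Fin N × Fin N, (1 / (N : ℝ) ^ 2) = 1 := by
    simp [Finset.sum_const, Finset.card_univ]
    field_simp
  have hmem : ∀ q : Fin N × Fin N, q ∈ univ → p q ∈ Set.Ici (0 : ℝ) := by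
    intro q _; exact Set.mem_Ici.mpr (sq_nonneg _)
  have hwp : ∑ q : Fin N × Fin N, (1 / (N : ℝ) ^ 2) • p q = 1 / N := by
    rw [← Finset.smul_sum, htot, smul_eq_mul]
    field_simp
  have hS : ∑ q : Fin N × Fin N, (1 / (N : ℝ) ^ 2) • ψ (p q) =
      (1 / (N : ℝ) ^ 2) * ∑ i, ∑ j, ψ (‖U i j‖ ^ 2) := by
    rw [← Finset.smul_sum, Fintype.sum_prod_type]
    simp [hp, smul_eq_mul]
  have hineq := hψ.convexOn.map_sum_le (fun q hq => (h₀ q hq).le) h₁ hmem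
  rw [hwp, hS] at hineq
  constructor
  · have := mul_le_mul_of_nonneg_left hineq (le_of_lt (by positivity : (0:ℝ) < (N:ℝ)^2))
    calc (N : ℝ) ^ 2 * ψ (1 / N) ≤ (N : ℝ) ^ 2 * ((1 / (N : ℝ) ^ 2) *
          ∑ i, ∑ j, ψ (‖U i j‖ ^ 2)) := this
      _ = ∑ i, ∑ j, ψ (‖U i j‖ ^ 2) := by field_simp
  · have key := hψ.map_sum_eq_iff h₀ h₁ hmem
    rw [hwp, hS] at key
    constructor
    · intro hEq
      have hψeq : ψ (1 / (N : ℝ)) =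
          (1 / (N : ℝ) ^ 2) * ∑ i, ∑ j, ψ (‖U i j‖ ^ 2) := by
        rw [hEq]; field_simp
      have hall := key.mp hψeq
      intro i j
      have hij : p (i, j) = 1 / N := hall (i, j) (mem_univ _)
      have habs : ‖U i j‖ ^ 2 = 1 / N := hij
      have : ‖U i j‖ = Real.sqrt (1 / N) := by
        rw [← habs, Real.sqrt_sq (norm_nonneg _)]
      rw [this, one_div, one_div, Real.sqrt_inv]
    · intro hall
      have : ∀ i j, ψ (‖U i j‖ ^ 2) = ψ (1 / N) := by
        intro i j
        congr 1
        rw [hall i j]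
        rw [div_pow, one_pow, Real.sq_sqrt hNpos.le]
      simp only [this, Finset.sum_const, Finset.card_univ, Fintype.card_fin,
        nsmul_eq_mul]
      ring
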